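/- A normalized n-partite amplitude tensor a is separable if and only if for every party k and every choice of row index I₀ and column index s with M_k(I₀, s) ≠ 0, the columns of M_k satisfy the proportionality relations M_k(I₀, s) * M_k(J, t) = M_k(I₀, t) * M_k(J, s) for every column index t and every row index J (i.e., M_k(I₀, s) times the t-th column equals M_k(I₀, t) times the s-th column). -/

import Mathlib

open Matrix

noncomputable section

/-- Insert `j` at position `k` into the partial index tuple `I`, producing a full index tuple. -/
def insertAt {n : ℕ} {d : Fin n → ℕ} (k : Fin n)
    (I : ∀ s : {s : Fin n // s ≠ k}, Fin (d s)) (j : Fin (d k)) :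
    ∀ t : Fin n, Fin (d t) :=
  fun t => if h : t = k then Fin.cast (congrArg d h).symm j else I ⟨t, h⟩

/-- The `k`-th flattening of an `n`-partite amplitude tensor `a`. -/
def flatten {n : ℕ} {d : Fin n → ℕ} (a : (∀ t : Fin n, Fin (d t)) → ℂ) (k : Fin n) :
    Matrix (∀ s : {s : Fin n // s ≠ k}, Fin (d s)) (Fin (d k)) ℂ :=
  fun I j => a (insertAt k I j)

/-- An `n`-partite amplitude tensor is separable if it is a product of local vectors. -/
def Separable {n : ℕ} {d : Fin n → ℕ} (a : (∀ t : Fin n, Fin (d t)) → ℂ) : Prop :=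
  ∃ f : ∀ k : Fin n, Fin (d k) → ℂ, ∀ i, a i = ∏ k : Fin n, f k (i k)

/-- An `n`-partite amplitude tensor is normalized if the squared amplitudes sum to 1. -/
def Normalized {n : ℕ} {d : Fin n → ℕ} (a : (∀ t : Fin n, Fin (d t)) → ℂ) : Prop :=
  ∑ i : ∀ t : Fin n, Fin (d t), ‖a i‖ ^ 2 = 1

lemma insertAt_apply_self {n : ℕ} {d : Fin n → ℕ} (k : Fin n)
    (I : ∀ s : {s : Fin n // s ≠ k}, Fin (d s)) (j : Fin (d k)) :
    insertAt k I j k = j := by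
  simp [insertAt]

lemma insertAt_apply_ne {n : ℕ} {d : Fin n → ℕ} (k : Fin n)
    (I : ∀ s : {s : Fin n // s ≠ k}, Fin (d s)) (j : Fin (d k)) (t : Fin n) (h : t ≠ k) :
    insertAt k I j t = I ⟨t, h⟩ := by
  simp [insertAt, h]

lemma insertAt_restrict {n : ℕ} {d : Fin n → ℕ} (k : Fin n) (x : ∀ t : Fin n, Fin (d t)) :
    insertAt k (fun s => x s.1) (x k) = x := by
  funext t
  by_cases h : t = k
  · subst h; simp [insertAt]
  · simp [insertAt, h]

/-- The flattening of a product tensor factors. -/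
lemma flatten_prod {n : ℕ} {d : Fin n → ℕ} (f : ∀ k : Fin n, Fin (d k) → ℂ) (k : Fin n)
    (I : ∀ s : {s : Fin n // s ≠ k}, Fin (d s)) (j : Fin (d k)) :
    (∏ t : Fin n, f t (insertAt k I j t)) =
      f k j * ∏ s : {s : Fin n // s ≠ k}, f s.1 (I s) := by
  rw [Finset.prod_eq_mul_prod_sdiff_singleton_of_mem (Finset.mem_univ k)
      (fun t => f t (insertAt k I j t))]
  congr 1
  · rw [insertAt_apply_self]
  · rw [Finset.prod_subtype (Finset.univ \ {k}) (p := fun t => t ≠ k) (by simp)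
      (fun t => f t (insertAt k I j t))]
    exact Finset.prod_congr rfl (fun s _ => by rw [insertAt_apply_ne k I j s.1 s.2])

/-- Corollary 2: separability iff the columns of each flattening are proportional,
as witnessed against any nonzero pivot entry. -/
theorem separable_iff_column_prop {n : ℕ} (hn : 1 ≤ n) (d : Fin n → ℕ) (hd : ∀ k, 1 ≤ d k)
    (a : (∀ t : Fin n, Fin (d t)) → ℂ) (ha : Normalized a) :
    Separable a ↔
      ∀ k : Fin n, ∀ I₀ : ∀ s : {s : Fin n // s ≠ k}, Fin (d s), ∀ s : Fin (d k),
        flatten a k I₀ s ≠ 0 →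
          ∀ t : Fin (d k), ∀ J : ∀ s : {s : Fin n // s ≠ k}, Fin (d s),
            flatten a k I₀ s * flatten a k J t = flatten a k I₀ t * flatten a k J s := by
  constructor
  · rintro ⟨f, hf⟩ k I₀ s _ t J
    have e : ∀ (I : ∀ s : {s : Fin n // s ≠ k}, Fin (d s)) (j : Fin (d k)),
        flatten a k I j = f k j * ∏ s : {s : Fin n // s ≠ k}, f s.1 (I s) := by
      intro I j
      rw [flatten, hf, flatten_prod]
    rw [e, e, e, e]; ring
  · intro H
    -- There is some index with nonzero amplitude.
    have hex : ∃ i, a i ≠ 0 := by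
      by_contra h
      push_neg at h
      have : (∑ i : ∀ t : Fin n, Fin (d t), ‖a i‖ ^ 2) = 0 := by
        apply Finset.sum_eq_zero
        intro i _
        rw [h i]; simp
      rw [Normalized] at ha
      rw [this] at ha
      exact zero_ne_one ha
    obtain ⟨i₀, hi₀⟩ := hex
    -- The key exchange relation.
    have key : ∀ (x y : ∀ t : Fin n, Fin (d t)) (k : Fin n), a x ≠ 0 →
        a x * a y = a (insertAt k (fun s => x s.1) (y k)) *
          a (insertAt k (fun s => y s.1) (x k)) := by
      intro x y k hx
      have := H k (fun s => x s.1) (x k)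
        (by rw [flatten, insertAt_restrict]; exact hx) (y k) (fun s => y s.1)
      rw [flatten, flatten, flatten, flatten, insertAt_restrict, insertAt_restrict] at this
      exact this
    -- Build the separating functions.
    refine ⟨fun k j => (if k = (⟨0, hn⟩ : Fin n) then (a i₀ ^ (n - 1))⁻¹ else 1) *
      a (insertAt k (fun s => i₀ s.1) j), ?_⟩
    intro i
    -- Hybrid tuples interpolating from i₀ to i.
    set g : ℕ → ∀ t : Fin n, Fin (d t) :=
      fun m t => if t.1 < m then i t else i₀ t with hg
    have hg0 : g 0 = i₀ := by funext t; simp [hg]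
    have hgn : g n = i := by funext t; simp [hg, t.2]
    have hstep : ∀ (m : ℕ) (hm : m < n),
        a i₀ * a (g (m + 1)) =
          a (insertAt ⟨m, hm⟩ (fun s => i₀ s.1) (i ⟨m, hm⟩)) * a (g m) := by
      intro m hm
      have hk := key i₀ (g (m + 1)) ⟨m, hm⟩ hi₀
      have h1 : g (m + 1) ⟨m, hm⟩ = i ⟨m, hm⟩ := by simp [hg]
      have h2 : insertAt ⟨m, hm⟩ (fun s => g (m + 1) s.1) (i₀ ⟨m, hm⟩) = g m := by
        funext t
        by_cases h : t = (⟨m, hm⟩ : Fin n)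
        · subst h
          simp [insertAt, hg]
        · rw [insertAt_apply_ne _ _ _ _ h]
          have : t.1 ≠ m := fun hc => h (Fin.ext hc)
          simp only [hg]
          by_cases h' : t.1 < m
          · rw [if_pos h', if_pos (by omega)]
          · rw [if_neg h', if_neg (by omega)]
      rw [h1, h2] at hk
      exact hk
    have main : ∀ m : ℕ, m ≤ n →
        a i₀ ^ m * a (g m) = a i₀ *
          ∏ t ∈ Finset.univ.filter (fun t : Fin n => t.1 < m),
            a (insertAt t (fun s => i₀ s.1) (i t)) := by
      intro m
      induction m with
      | zero =>
        intro _
        simp [hg0]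
      | succ m ih =>
        intro hm
        have hm' : m < n := by omega
        have hfil : Finset.univ.filter (fun t : Fin n => t.1 < m + 1) =
            insert ⟨m, hm'⟩ (Finset.univ.filter (fun t : Fin n => t.1 < m)) := by
          ext t
          simp only [Finset.mem_filter, Finset.mem_univ, true_and, Finset.mem_insert]
          constructor
          · intro h
            by_cases h' : t.1 = m
            · exact Or.inl (Fin.ext h')
            · exact Or.inr (by omega)
          · rintro (rfl | h)
            · simp
            · omega
        rw [hfil, Finset.prod_insert (by simp)]
        have hst := hstep m hm'
        calc a i₀ ^ (m + 1) * a (g (m + 1))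
            = a i₀ ^ m * (a i₀ * a (g (m + 1))) := by ring
          _ = a (insertAt ⟨m, hm'⟩ (fun s => i₀ s.1) (i ⟨m, hm'⟩)) *
                (a i₀ ^ m * a (g m)) := by rw [hst]; ring
          _ = _ := by rw [ih (by omega)]; ring
    have hmain := main n le_rfl
    rw [hgn] at hmain
    have hfiln : Finset.univ.filter (fun t : Fin n => t.1 < n) = Finset.univ := by
      ext t; simp [t.2]
    rw [hfiln] at hmain
    -- Finish: solve for a i.
    have hsplit : (∏ k : Fin n, ((if k = (⟨0, hn⟩ : Fin n) then (a i₀ ^ (n - 1))⁻¹ else 1) *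
        a (insertAt k (fun s => i₀ s.1) (i k)))) =
        (a i₀ ^ (n - 1))⁻¹ * ∏ k : Fin n, a (insertAt k (fun s => i₀ s.1) (i k)) := by
      rw [Finset.prod_mul_distrib]
      congr 1
      rw [Finset.prod_ite_eq' Finset.univ (⟨0, hn⟩ : Fin n) (fun _ => (a i₀ ^ (n - 1))⁻¹)]
      simp
    rw [hsplit]
    have hpow : a i₀ ^ n = a i₀ * a i₀ ^ (n - 1) := by
      rw [← pow_succ']
      congr 1
      omega
    have hne : a i₀ ^ (n - 1) ≠ 0 := pow_ne_zero _ hi₀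
    rw [hpow] at hmain
    have h3 : a i₀ ^ (n - 1) * a i =
        ∏ t : Fin n, a (insertAt t (fun s => i₀ s.1) (i t)) :=
      mul_left_cancel₀ hi₀ (by linear_combination hmain)
    field_simp
    linear_combination h3
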